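/- Let X₁, …, X_n be Banach spaces, let A : X₁ × ⋯ × X_n → [0,∞) be an arbitrary map, let 0 < q₁, …, q_n < ∞ and define q by 1/q = Σ_{k=1}^n 1/q_k. If there exists C > 0 such that (Σ_{j=1}^m (|b_j^{(1)} ⋯ b_j^{(n)}| · A(x_j^{(1)}, …, x_j^{(n)}))^q)^{1/q} ≤ C · ∏_{k=1}^n sup_{φ∈B_{X_k*}} (Σ_{j=1}^m (|b_j^{(k)}| · |φ(x_j^{(k)})|)^{q_k})^{1/q_k} for every m ∈ ℕ and all x_j^{(k)} ∈ X_k and scalars b_j^{(k)}, then there exist a constant C' > 0 and Borel probability measures μ_k on B_{X_k*} (k = 1, …, n) such that A(x^{(1)}, …, x^{(n)}) ≤ C' · ∏_{k=1}^n (∫_{B_{X_k*}} |φ(x^{(k)})|^{q_k} dμ_k(φ))^{1/q_k} for all x^{(k)} ∈ X_k. -/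

import Mathlib

open scoped BigOperators
open MeasureTheory

/-- The closed unit ball of the dual of `X`, endowed with the weak-star topology
(by Banach–Alaoglu, a compact Hausdorff space), carrying its Borel σ-algebra. -/
def weakDualBall (𝕜 X : Type*) [NontriviallyNormedField 𝕜]
    [SeminormedAddCommGroup X] [NormedSpace 𝕜 X] : Type _ :=
  {φ : WeakDual 𝕜 X // ‖WeakDual.toStrongDual φ‖ ≤ 1}

noncomputable instance (𝕜 X : Type*) [NontriviallyNormedField 𝕜]
    [SeminormedAddCommGroup X] [NormedSpace 𝕜 X] :
    TopologicalSpace (weakDualBall 𝕜 X) :=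
  instTopologicalSpaceSubtype

noncomputable instance (𝕜 X : Type*) [NontriviallyNormedField 𝕜]
    [SeminormedAddCommGroup X] [NormedSpace 𝕜 X] :
    MeasurableSpace (weakDualBall 𝕜 X) := borel _

set_option linter.unusedSectionVars false
set_option linter.unusedSectionVars false

open scoped BigOperators NNReal ENNReal
open MeasureTheory BoundedContinuousFunction Set

noncomputable section

namespace Stmt15Aux

variable {Y : Type*} [TopologicalSpace Y] [CompactSpace Y] [T2Space Y]

/-- Coerce a nonnegative bounded continuous function to a real one. -/
def toRealBCF (f : Y →ᵇ ℝ≥0) : Y →ᵇ ℝ :=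
  BoundedContinuousFunction.mkOfCompact
    ⟨fun y => (f y : ℝ), NNReal.continuous_coe.comp f.continuous⟩

@[simp] lemma toRealBCF_apply (f : Y →ᵇ ℝ≥0) (y : Y) : toRealBCF f y = (f y : ℝ) := rfl

variable (Λ : (Y →ᵇ ℝ) →L[ℝ] ℝ)

lemma lam_mono (hpos : ∀ f : Y →ᵇ ℝ, (∀ y, 0 ≤ f y) → 0 ≤ Λ f) {f g : Y →ᵇ ℝ} (h : ∀ y, f y ≤ g y) : Λ f ≤ Λ g := by
  have := hpos (g - f) (fun y => by simpa using sub_nonneg.2 (h y))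
  rw [map_sub] at this; linarith

/-- The induced `ℝ≥0`-linear functional on nonnegative bounded continuous functions. -/
def lamN (hpos : ∀ f : Y →ᵇ ℝ, (∀ y, 0 ≤ f y) → 0 ≤ Λ f) : (Y →ᵇ ℝ≥0) →ₗ[ℝ≥0] ℝ≥0 where
  toFun f := (Λ (toRealBCF f)).toNNReal
  map_add' f g := by
    show (Λ (toRealBCF (f + g))).toNNReal = _
    have h1 : toRealBCF (f + g) = toRealBCF f + toRealBCF g := by
      ext y; simp [toRealBCF]
    rw [h1, map_add,
      Real.toNNReal_add (hpos _ (fun y => (f y).coe_nonneg)) (hpos _ (fun y => (g y).coe_nonneg))]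
  map_smul' c f := by
    show (Λ (toRealBCF (c • f))).toNNReal = _
    have h1 : toRealBCF (c • f) = (c : ℝ) • toRealBCF f := by
      ext y; simp [toRealBCF, NNReal.smul_def]
    rw [h1, _root_.map_smul]
    simp only [smul_eq_mul, RingHom.id_apply]
    rw [Real.toNNReal_mul c.coe_nonneg, Real.toNNReal_coe]

lemma coe_lamN (hpos : ∀ f : Y →ᵇ ℝ, (∀ y, 0 ≤ f y) → 0 ≤ Λ f) (f : Y →ᵇ ℝ≥0) : ((lamN Λ hpos f : ℝ≥0) : ℝ) = Λ (toRealBCF f) :=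
  Real.coe_toNNReal _ (hpos _ (fun y => (f y).coe_nonneg))

lemma lamN_mono (hpos : ∀ f : Y →ᵇ ℝ, (∀ y, 0 ≤ f y) → 0 ≤ Λ f) {f g : Y →ᵇ ℝ≥0} (h : ∀ y, f y ≤ g y) : lamN Λ hpos f ≤ lamN Λ hpos g := by
  rw [← NNReal.coe_le_coe, coe_lamN, coe_lamN]
  exact lam_mono Λ hpos (fun y => by exact_mod_cast h y)


/-- Real → nonneg bounded continuous function. -/
def toNNRealBCF (g : Y →ᵇ ℝ) : Y →ᵇ ℝ≥0 :=
  BoundedContinuousFunction.mkOfCompact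
    ⟨fun y => (g y).toNNReal, continuous_real_toNNReal.comp g.continuous⟩

@[simp] lemma toNNRealBCF_apply (g : Y →ᵇ ℝ) (y : Y) : toNNRealBCF g y = (g y).toNNReal := rfl

theorem exists_prob_measure [MeasurableSpace Y] [BorelSpace Y]
    (Λ : (Y →ᵇ ℝ) →L[ℝ] ℝ)
    (hpos : ∀ f : Y →ᵇ ℝ, (∀ y, 0 ≤ f y) → 0 ≤ Λ f) (hone : Λ (1 : Y →ᵇ ℝ) = 1) :
    ∃ μ : Measure Y, IsProbabilityMeasure μ ∧
      ∀ f : Y →ᵇ ℝ, (∀ y, 0 ≤ f y) → Λ f ≤ ∫ y, f y ∂μ := by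
  classical
  let L : CompactlySupportedContinuousMap Y ℝ →ₗ[ℝ] ℝ :=
    { toFun := fun f => Λ (BoundedContinuousFunction.mkOfCompact (f : C(Y, ℝ)))
      map_add' := fun f g => by rw [← map_add]; congr 1
      map_smul' := fun c f => by
        rw [RingHom.id_apply, smul_eq_mul, ← smul_eq_mul, ← Λ.map_smul]; congr 1 }
  let P : CompactlySupportedContinuousMap Y ℝ →ₚ[ℝ] ℝ :=
    PositiveLinearMap.mk₀ L (fun f hf => hpos _ (fun y => hf y))
  have hint : ∀ f : Y →ᵇ ℝ, ∫ y, f y ∂(RealRMK.rieszMeasure P) = Λ f := by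
    intro f
    have := RealRMK.integral_rieszMeasure P
      (CompactlySupportedContinuousMap.continuousMapEquiv f.toContinuousMap)
    exact this
  refine ⟨RealRMK.rieszMeasure P, ⟨?_⟩, fun f _ => (hint f).ge⟩
  have := hint 1
  simp [hone] at this
  exact (ENNReal.toReal_eq_one_iff _).mp this


section Ball

variable (𝕜 Z : Type*) [RCLike 𝕜] [NormedAddCommGroup Z] [NormedSpace 𝕜 Z]

instance : T2Space (weakDualBall 𝕜 Z) :=
  show T2Space (Subtype _) from inferInstance

instance : BorelSpace (weakDualBall 𝕜 Z) := ⟨rfl⟩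

instance : Nonempty (weakDualBall 𝕜 Z) :=
  ⟨⟨0, by simp⟩⟩

instance : CompactSpace (weakDualBall 𝕜 Z) := by
  have h : IsCompact {φ : WeakDual 𝕜 Z | ‖WeakDual.toStrongDual φ‖ ≤ 1} := by
    have h2 := WeakDual.isCompact_closedBall (𝕜 := 𝕜) (E := Z) 0 1
    convert h2 using 1
    ext φ
    simp [Metric.mem_closedBall, dist_zero_right]
  exact isCompact_iff_compactSpace.mp h

variable {𝕜 Z}

/-- evaluation-rpow function on the dual ball as a bounded continuous function -/
def evalRpow (p : ℝ) (hp : 0 ≤ p) (x : Z) : (weakDualBall 𝕜 Z) →ᵇ ℝ :=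
  BoundedContinuousFunction.mkOfCompact
    ⟨fun φ => ‖φ.1 x‖ ^ p,
      by
        have h1 : Continuous fun φ : weakDualBall 𝕜 Z => ‖φ.1 x‖ :=
          ((WeakDual.eval_continuous x).comp continuous_subtype_val).norm
        exact h1.rpow_const (fun φ => Or.inr hp)⟩

@[simp] lemma evalRpow_apply (p : ℝ) (hp : 0 ≤ p) (x : Z) (φ : weakDualBall 𝕜 Z) :
    evalRpow p hp x φ = ‖φ.1 x‖ ^ p := rfl

lemma evalRpow_nonneg (p : ℝ) (hp : 0 ≤ p) (x : Z) (φ : weakDualBall 𝕜 Z) :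
    0 ≤ evalRpow p hp x φ := Real.rpow_nonneg (norm_nonneg _) _

end Ball

section PosSet

variable (Y : Type*) [TopologicalSpace Y] [CompactSpace Y]

/-- The set of positive normalized weak-star functionals on `Y →ᵇ ℝ`. -/
def posSet : Set (WeakDual ℝ (Y →ᵇ ℝ)) :=
  {Λ | ‖WeakDual.toStrongDual Λ‖ ≤ 1 ∧ Λ (1 : Y →ᵇ ℝ) = 1 ∧
    ∀ f : Y →ᵇ ℝ, (∀ y, 0 ≤ f y) → 0 ≤ Λ f}

lemma isCompact_posSet : IsCompact (posSet Y) := by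
  have hball := WeakDual.isCompact_closedBall (𝕜 := ℝ) (E := Y →ᵇ ℝ) 0 1
  refine IsCompact.of_isClosed_subset hball ?_ ?_
  · have h1 : IsClosed {Λ : WeakDual ℝ (Y →ᵇ ℝ) | ‖WeakDual.toStrongDual Λ‖ ≤ 1} := by
      have h2 := WeakDual.isClosed_closedBall (𝕜 := ℝ) (E := Y →ᵇ ℝ) 0 1
      convert h2 using 1
      ext φ
      simp [Metric.mem_closedBall, dist_zero_right]
    have h2 : IsClosed {Λ : WeakDual ℝ (Y →ᵇ ℝ) | Λ (1 : Y →ᵇ ℝ) = 1} :=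
      isClosed_eq (WeakDual.eval_continuous _) continuous_const
    have h3 : IsClosed {Λ : WeakDual ℝ (Y →ᵇ ℝ) |
        ∀ f : Y →ᵇ ℝ, (∀ y, 0 ≤ f y) → 0 ≤ Λ f} := by
      have he : {Λ : WeakDual ℝ (Y →ᵇ ℝ) | ∀ f : Y →ᵇ ℝ, (∀ y, 0 ≤ f y) → 0 ≤ Λ f}
          = ⋂ (f : Y →ᵇ ℝ) (_ : ∀ y, 0 ≤ f y), {Λ : WeakDual ℝ (Y →ᵇ ℝ) | 0 ≤ Λ f} := by
        ext Λ; simp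
      rw [he]
      exact isClosed_iInter fun f => isClosed_iInter fun _ =>
        isClosed_le continuous_const (WeakDual.eval_continuous f)
    have he2 : posSet Y = _ ∩ (_ ∩ _) := rfl
    exact (h1.inter (h2.inter h3))
  · intro Λ hΛ
    show Λ ∈ WeakDual.toStrongDual ⁻¹' Metric.closedBall 0 1
    simp only [Set.mem_preimage, Metric.mem_closedBall, dist_zero_right]
    exact (dist_zero_right (WeakDual.toStrongDual Λ)).trans_le hΛ.1

lemma convex_posSet : Convex ℝ (posSet Y) := by
  intro Λ₁ h₁ Λ₂ h₂ a b ha hb hab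
  have happ : ∀ f : Y →ᵇ ℝ, (a • Λ₁ + b • Λ₂) f = a * Λ₁ f + b * Λ₂ f := fun f => rfl
  refine ⟨?_, ?_, ?_⟩
  · refine ContinuousLinearMap.opNorm_le_bound _ zero_le_one fun f => ?_
    have e : WeakDual.toStrongDual (a • Λ₁ + b • Λ₂) f = a * Λ₁ f + b * Λ₂ f := rfl
    have h1 : ‖Λ₁ f‖ ≤ ‖f‖ := ((WeakDual.toStrongDual Λ₁).le_opNorm f).trans
      (by simpa using mul_le_mul_of_nonneg_right h₁.1 (norm_nonneg f))
    have h2 : ‖Λ₂ f‖ ≤ ‖f‖ := ((WeakDual.toStrongDual Λ₂).le_opNorm f).trans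
      (by simpa using mul_le_mul_of_nonneg_right h₂.1 (norm_nonneg f))
    rw [e, one_mul, Real.norm_eq_abs]
    rw [Real.norm_eq_abs] at h1 h2
    calc |a * Λ₁ f + b * Λ₂ f| ≤ |a * Λ₁ f| + |b * Λ₂ f| := abs_add_le _ _
      _ = a * |Λ₁ f| + b * |Λ₂ f| := by rw [abs_mul, abs_mul, abs_of_nonneg ha, abs_of_nonneg hb]
      _ ≤ a * ‖f‖ + b * ‖f‖ := by gcongr
      _ = ‖f‖ := by rw [← add_mul, hab, one_mul]
  · rw [happ, h₁.2.1, h₂.2.1]; linarith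
  · intro f hf
    rw [happ]
    have := h₁.2.2 f hf
    have := h₂.2.2 f hf
    positivity

/-- Dirac evaluation as a weak-star functional. -/
def diracW {Y : Type*} [TopologicalSpace Y] (y : Y) : WeakDual ℝ (Y →ᵇ ℝ) :=
  BoundedContinuousFunction.evalCLM ℝ y

@[simp] lemma diracW_apply {Y : Type*} [TopologicalSpace Y] (y : Y) (f : Y →ᵇ ℝ) :
    diracW y f = f y := rfl

lemma diracW_mem (y : Y) : diracW y ∈ posSet Y := by
  refine ⟨?_, rfl, fun f hf => hf y⟩
  refine ContinuousLinearMap.opNorm_le_bound _ zero_le_one ?_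
  intro f
  rw [one_mul]
  calc ‖(diracW y) f‖ = ‖f y‖ := rfl
    _ ≤ ‖f‖ := f.norm_coe_le_norm y

end PosSet


lemma affine_aux {n : ℕ} (m u v : Fin n → ℝ) (K a b : ℝ) (hab : a + b = 1) :
    K - ∑ k, m k * (a * u k + b * v k)
      = a * (K - ∑ k, m k * u k) + b * (K - ∑ k, m k * v k) := by
  have hs : ∑ k, m k * (a * u k + b * v k)
      = a * (∑ k, m k * u k) + b * (∑ k, m k * v k) := by
    rw [Finset.mul_sum, Finset.mul_sum, ← Finset.sum_add_distrib]
    exact Finset.sum_congr rfl fun k _ => by ring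
  rw [hs]; linear_combination (-K) * hab

end Stmt15Aux

open Stmt15Aux

set_option maxHeartbeats 4000000 in
/-- Let `X₁, …, X_n` be Banach spaces, `A : X₁ × ⋯ × X_n → [0,∞)` an
arbitrary map, `0 < q₁, …, q_n < ∞` and `1/q = ∑ 1/q_k`.  If there is `C > 0` such that
`(∑ⱼ (|bⱼ⁽¹⁾⋯bⱼ⁽ⁿ⁾| A(xⱼ⁽¹⁾,…,xⱼ⁽ⁿ⁾))^q)^{1/q} ≤ C ∏_k sup_{φ∈B_{X_k*}}
(∑ⱼ (|bⱼ⁽ᵏ⁾||φ(xⱼ⁽ᵏ⁾)|)^{q_k})^{1/q_k}` for all finite families, then there are `C' > 0`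
and Borel probability measures `μ_k` on `B_{X_k*}` (weak-star topology) with
`A(x⁽¹⁾,…,x⁽ⁿ⁾) ≤ C' ∏_k (∫ |φ(x⁽ᵏ⁾)|^{q_k} dμ_k)^{1/q_k}` for all `x⁽ᵏ⁾ ∈ X_k`. -/
theorem stmt15 {𝕜 : Type*} [RCLike 𝕜] {n : ℕ} {X : Fin n → Type*}
    [∀ k, NormedAddCommGroup (X k)] [∀ k, NormedSpace 𝕜 (X k)]
    [∀ k, CompleteSpace (X k)]
    (A : (∀ k, X k) → ℝ) (hA : ∀ x, 0 ≤ A x)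
    (q : Fin n → ℝ) (hq : ∀ k, 0 < q k)
    (q₀ : ℝ) (hq₀ : 0 < q₀) (hq₀eq : 1 / q₀ = ∑ k, 1 / q k)
    (C : ℝ) (hC : 0 < C)
    (h : ∀ (m : ℕ) (x : Fin m → ∀ k, X k) (b : Fin m → Fin n → 𝕜),
      (∑ j, ((∏ k, ‖b j k‖) * A (x j)) ^ q₀) ^ (1 / q₀) ≤
        C * ∏ k, ⨆ φ : weakDualBall 𝕜 (X k),
          (∑ j, (‖b j k‖ * ‖φ.1 (x j k)‖) ^ q k) ^ (1 / q k)) :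
    ∃ C' : ℝ, 0 < C' ∧ ∃ μ : ∀ k, Measure (weakDualBall 𝕜 (X k)),
      (∀ k, IsProbabilityMeasure (μ k)) ∧
      ∀ x : ∀ k, X k,
        A x ≤ C' * ∏ k, (∫ φ, ‖φ.1 (x k)‖ ^ q k ∂(μ k)) ^ (1 / q k) := by
  classical
  rcases Nat.eq_zero_or_pos n with hn | hn
  · exfalso
    have he : (Finset.univ : Finset (Fin n)) = ∅ := by
      subst hn; rfl
    rw [he, Finset.sum_empty] at hq₀eq
    have hpos : (0:ℝ) < 1/q₀ := by positivity
    rw [hq₀eq] at hpos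
    exact lt_irrefl _ hpos
  haveI : Nonempty (Fin n) := Fin.pos_iff_nonempty.mp hn
  set θ : Fin n → ℝ := fun k => q₀ / q k with hθ
  have hθpos : ∀ k, 0 < θ k := fun k => div_pos hq₀ (hq k)
  have hθsum : ∑ k, θ k = 1 := by
    have h1 : ∑ k, q₀ / q k = q₀ * ∑ k, 1 / q k := by
      rw [Finset.mul_sum]
      exact Finset.sum_congr rfl fun k _ => by ring
    show ∑ k, q₀ / q k = 1
    rw [h1, ← hq₀eq]
    field_simp
  set hfun : ∀ k, X k → ((weakDualBall 𝕜 (X k)) →ᵇ ℝ) :=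
    fun k x => evalRpow (q k) (hq k).le x with hhfun
  set D : ∀ k, Set (WeakDual ℝ ((weakDualBall 𝕜 (X k)) →ᵇ ℝ)) :=
    fun k => posSet _ with hD
  set Dpi : Set (∀ k, WeakDual ℝ ((weakDualBall 𝕜 (X k)) →ᵇ ℝ)) := Set.pi Set.univ D with hDpi
  have hDpiC : IsCompact Dpi := isCompact_univ_pi fun k => isCompact_posSet _
  set G : ((∀ k, X k) × (Fin n → ℝ≥0)) → (∀ k, WeakDual ℝ ((weakDualBall 𝕜 (X k)) →ᵇ ℝ)) → ℝ :=
    fun c Λ => (∏ k, (c.2 k : ℝ)) ^ q₀ * A c.1 ^ q₀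
      - ∑ k, (C ^ q₀ * θ k * (c.2 k : ℝ) ^ q k) * Λ k (hfun k (c.1 k)) with hG
  have claim2 : ∀ (t : Finset ((∀ k, X k) × (Fin n → ℝ≥0)))
      (lam : ((∀ k, X k) × (Fin n → ℝ≥0)) → ℝ), (∀ c, 0 ≤ lam c) →
      ∃ Λ ∈ Dpi, ∑ c ∈ t, lam c * G c Λ ≤ 0 := by
    intro t lam hlam
    set F : Finset ((∀ k, X k) × (Fin n → ℝ≥0)) := t.filter (fun c => 0 < lam c) with hFdef
    have hlamF : ∀ c ∈ F, 0 < lam c := fun c hc => (Finset.mem_filter.mp hc).2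
    set Hf : ∀ k, weakDualBall 𝕜 (X k) → ℝ :=
      fun k φ => ∑ c ∈ F, lam c * (c.2 k : ℝ) ^ q k * ‖φ.1 (c.1 k)‖ ^ q k with hHf
    have hHcont : ∀ k, Continuous (Hf k) := by
      intro k
      refine continuous_finset_sum _ fun c _ => ?_
      refine Continuous.mul continuous_const ?_
      have h1 : Continuous fun φ : weakDualBall 𝕜 (X k) => ‖φ.1 (c.1 k)‖ :=
        ((WeakDual.eval_continuous (c.1 k)).comp continuous_subtype_val).norm
      exact h1.rpow_const fun _ => Or.inr (hq k).le
    have hHnn : ∀ k φ, 0 ≤ Hf k φ := fun k φ => Finset.sum_nonneg fun c hc =>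
      mul_nonneg (mul_nonneg (hlamF c hc).le (Real.rpow_nonneg (c.2 k).coe_nonneg _))
        (Real.rpow_nonneg (norm_nonneg _) _)
    have hmaxex : ∀ k, ∃ φmax : weakDualBall 𝕜 (X k), ∀ φ, Hf k φ ≤ Hf k φmax := by
      intro k
      obtain ⟨φmax, -, hφmax⟩ :=
        isCompact_univ.exists_isMaxOn Set.univ_nonempty (hHcont k).continuousOn
      exact ⟨φmax, fun φ => hφmax (Set.mem_univ φ)⟩
    choose φm hφm using hmaxex
    set S : Fin n → ℝ := fun k => Hf k (φm k) with hSdef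
    have hSnn : ∀ k, 0 ≤ S k := fun k => hHnn k (φm k)
    refine ⟨fun k => diracW (φm k), fun k _ => diracW_mem _ (φm k), ?_⟩
    set Λ : ∀ k, WeakDual ℝ ((weakDualBall 𝕜 (X k)) →ᵇ ℝ) := fun k => diracW (φm k) with hΛdef
    have hredu : ∑ c ∈ t, lam c * G c Λ = ∑ c ∈ F, lam c * G c Λ := by
      refine (Finset.sum_filter_of_ne ?_).symm
      intro c hc hne
      rcases (hlam c).lt_or_eq with hpos | hzero
      · exact hpos
      · exact absurd (by rw [← hzero, zero_mul]) hne
    have heval : ∀ (k : Fin n) (z : X k), Λ k (hfun k z) = ‖(φm k).1 z‖ ^ q k :=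
      fun k z => rfl
    set L : ℝ := ∑ c ∈ F, lam c * ((∏ k, (c.2 k : ℝ)) ^ q₀ * A c.1 ^ q₀) with hLdef
    have hLnn : 0 ≤ L := Finset.sum_nonneg fun c hc => mul_nonneg (hlamF c hc).le
      (mul_nonneg (Real.rpow_nonneg (Finset.prod_nonneg fun k _ => (c.2 k).coe_nonneg) _)
        (Real.rpow_nonneg (hA _) _))
    have hsplit : ∑ c ∈ F, lam c * G c Λ = L - C ^ q₀ * ∑ k, θ k * S k := by
      have h1 : ∀ c ∈ F, lam c * G c Λ
          = lam c * ((∏ k, (c.2 k : ℝ)) ^ q₀ * A c.1 ^ q₀)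
            - ∑ k, C ^ q₀ * θ k * (lam c * (c.2 k : ℝ) ^ q k * Λ k (hfun k (c.1 k))) := by
        intro c _
        rw [hG]
        simp only
        rw [mul_sub, Finset.mul_sum]
        congr 1
        exact Finset.sum_congr rfl fun k _ => by ring
      rw [Finset.sum_congr rfl h1, Finset.sum_sub_distrib]
      congr 1
      rw [Finset.sum_comm, Finset.mul_sum]
      refine Finset.sum_congr rfl fun k _ => ?_
      rw [hSdef]
      simp only [hHf]
      rw [Finset.mul_sum, Finset.mul_sum]
      refine Finset.sum_congr rfl fun c _ => ?_
      rw [heval]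
      ring
    set m := F.card with hm
    set e : Fin m ≃ {c // c ∈ F} := F.equivFin.symm with he
    have hlamFj : ∀ j : Fin m, 0 < lam (e j).1 := fun j => hlamF _ (e j).2
    have hreindex : ∀ g : ((∀ k, X k) × (Fin n → ℝ≥0)) → ℝ,
        ∑ j : Fin m, g (e j).1 = ∑ c ∈ F, g c := by
      intro g
      calc ∑ j : Fin m, g (e j).1 = ∑ c : {c // c ∈ F}, g c.1 :=
            Equiv.sum_comp e (fun c => g c.1)
        _ = ∑ c ∈ F.attach, g c.1 := by rw [Finset.univ_eq_attach]
        _ = ∑ c ∈ F, g c := Finset.sum_attach F g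
    set xx : Fin m → ∀ k, X k := fun j => (e j).1.1 with hxx
    set bb : Fin m → Fin n → 𝕜 := fun j k =>
      ((lam (e j).1 ^ (1 / q k) * ((e j).1.2 k : ℝ) : ℝ) : 𝕜) with hbb
    have hbnorm : ∀ j k, ‖bb j k‖ = lam (e j).1 ^ (1 / q k) * ((e j).1.2 k : ℝ) := by
      intro j k
      rw [hbb]
      simp only
      rw [RCLike.norm_ofReal]
      exact abs_of_nonneg (mul_nonneg (Real.rpow_nonneg (hlamFj j).le _) ((e j).1.2 k).coe_nonneg)
    have hprodb : ∀ j, ∏ k, ‖bb j k‖ = lam (e j).1 ^ (1 / q₀) * ∏ k, ((e j).1.2 k : ℝ) := by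
      intro j
      rw [Finset.prod_congr rfl (fun k _ => hbnorm j k), Finset.prod_mul_distrib]
      congr 1
      rw [← Real.rpow_sum_of_pos (hlamFj j) (fun k => 1 / q k) Finset.univ, ← hq₀eq]
    have hLHS : ∑ j : Fin m, ((∏ k, ‖bb j k‖) * A (xx j)) ^ q₀ = L := by
      have hterm : ∀ j : Fin m, ((∏ k, ‖bb j k‖) * A (xx j)) ^ q₀
          = lam (e j).1 * ((∏ k, ((e j).1.2 k : ℝ)) ^ q₀ * A (e j).1.1 ^ q₀) := by
        intro j
        rw [hprodb j]
        have h0 : xx j = (e j).1.1 := rfl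
        rw [h0, mul_assoc]
        have hprodnn : (0:ℝ) ≤ ∏ k, ((e j).1.2 k : ℝ) :=
          Finset.prod_nonneg fun k _ => ((e j).1.2 k).coe_nonneg
        rw [Real.mul_rpow (Real.rpow_nonneg (hlamFj j).le _)
          (mul_nonneg hprodnn (hA _)), Real.mul_rpow hprodnn (hA _)]
        rw [← Real.rpow_mul (hlamFj j).le, one_div_mul_cancel hq₀.ne', Real.rpow_one]
      rw [Finset.sum_congr rfl (fun j _ => hterm j), hLdef]
      exact hreindex (fun c => lam c * ((∏ k, (c.2 k : ℝ)) ^ q₀ * A c.1 ^ q₀))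
    have hinner : ∀ (k : Fin n) (φ : weakDualBall 𝕜 (X k)),
        ∑ j : Fin m, (‖bb j k‖ * ‖φ.1 (xx j k)‖) ^ q k = Hf k φ := by
      intro k φ
      have hterm : ∀ j : Fin m, (‖bb j k‖ * ‖φ.1 (xx j k)‖) ^ q k
          = lam (e j).1 * (((e j).1.2 k : ℝ)) ^ q k * ‖φ.1 ((e j).1.1 k)‖ ^ q k := by
        intro j
        rw [hbnorm j k]
        have h0 : xx j = (e j).1.1 := rfl
        rw [h0]
        rw [Real.mul_rpow (mul_nonneg (Real.rpow_nonneg (hlamFj j).le _)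
          ((e j).1.2 k).coe_nonneg) (norm_nonneg _),
          Real.mul_rpow (Real.rpow_nonneg (hlamFj j).le _) ((e j).1.2 k).coe_nonneg]
        rw [← Real.rpow_mul (hlamFj j).le, one_div_mul_cancel (hq k).ne', Real.rpow_one]
      rw [Finset.sum_congr rfl (fun j _ => hterm j), hHf]
      simp only
      exact hreindex (fun c => lam c * ((c.2 k : ℝ)) ^ q k * ‖φ.1 (c.1 k)‖ ^ q k)
    have hsupk : ∀ k : Fin n,
        (⨆ φ : weakDualBall 𝕜 (X k),
          (∑ j : Fin m, (‖bb j k‖ * ‖φ.1 (xx j k)‖) ^ q k) ^ (1 / q k))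
        = S k ^ (1 / q k) := by
      intro k
      have hmono : ∀ φ, (Hf k φ) ^ (1 / q k) ≤ (S k) ^ (1 / q k) := fun φ =>
        Real.rpow_le_rpow (hHnn k φ) (hφm k φ) (one_div_nonneg.mpr (hq k).le)
      refine le_antisymm ?_ ?_
      · refine ciSup_le fun φ => ?_
        rw [hinner k φ]
        exact hmono φ
      · have hbdd : BddAbove (Set.range fun φ : weakDualBall 𝕜 (X k) =>
            (∑ j : Fin m, (‖bb j k‖ * ‖φ.1 (xx j k)‖) ^ q k) ^ (1 / q k)) := by
          refine ⟨(S k) ^ (1 / q k), ?_⟩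
          rintro y ⟨φ, rfl⟩
          simp only
          rw [hinner k φ]
          exact hmono φ
        have hle := le_ciSup hbdd (φm k)
        calc S k ^ (1 / q k)
            = (∑ j : Fin m, (‖bb j k‖ * ‖(φm k).1 (xx j k)‖) ^ q k) ^ (1 / q k) := by
              rw [hinner k (φm k), hSdef]
          _ ≤ _ := hle
    have hh := h m xx bb
    rw [hLHS, Finset.prod_congr rfl (fun k _ => hsupk k)] at hh
    have hmain : L ≤ C ^ q₀ * ∏ k, S k ^ θ k := by
      have hL1 : (L ^ (1 / q₀)) ^ q₀ = L := by
        rw [← Real.rpow_mul hLnn, one_div_mul_cancel hq₀.ne', Real.rpow_one]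
      have hrall : (0:ℝ) ≤ ∏ k, S k ^ (1 / q k) :=
        Finset.prod_nonneg fun k _ => Real.rpow_nonneg (hSnn k) _
      have hrhs : (C * ∏ k, S k ^ (1 / q k)) ^ q₀ = C ^ q₀ * ∏ k, S k ^ θ k := by
        rw [Real.mul_rpow hC.le hrall]
        congr 1
        rw [← Real.finset_prod_rpow _ _ (fun k _ => Real.rpow_nonneg (hSnn k) _) q₀]
        refine Finset.prod_congr rfl fun k _ => ?_
        rw [← Real.rpow_mul (hSnn k)]
        congr 1
        rw [hθ]
        ring
      calc L = (L ^ (1 / q₀)) ^ q₀ := hL1.symm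
        _ ≤ (C * ∏ k, S k ^ (1 / q k)) ^ q₀ :=
            Real.rpow_le_rpow (Real.rpow_nonneg hLnn _) hh hq₀.le
        _ = C ^ q₀ * ∏ k, S k ^ θ k := hrhs
    have hAM : ∏ k, S k ^ θ k ≤ ∑ k, θ k * S k :=
      Real.geom_mean_le_arith_mean_weighted Finset.univ θ S
        (fun k _ => (hθpos k).le) hθsum (fun k _ => hSnn k)
    rw [hredu, hsplit]
    have hCq : (0:ℝ) < C ^ q₀ := Real.rpow_pos_of_pos hC _
    nlinarith [hmain, hAM, hCq]
  have hGcont : ∀ c, Continuous (G c) := by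
    intro c
    rw [hG]
    refine Continuous.sub continuous_const ?_
    refine continuous_finset_sum _ fun k _ => ?_
    exact continuous_const.mul
      ((WeakDual.eval_continuous (hfun k (c.1 k))).comp (continuous_apply k))
  have hinter : (Dpi ∩ ⋂ c, {Λ | G c Λ ≤ 0}).Nonempty := by
    by_contra hemp
    rw [Set.not_nonempty_iff_eq_empty] at hemp
    obtain ⟨t, ht⟩ := hDpiC.elim_finite_subfamily_closed _
      (fun c => isClosed_le (hGcont c) continuous_const) hemp
    set T : (∀ k, WeakDual ℝ ((weakDualBall 𝕜 (X k)) →ᵇ ℝ)) → ({c // c ∈ t} → ℝ) :=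
      fun Λ c => G c.1 Λ with hT
    have hTcont : Continuous T := continuous_pi fun c => hGcont c.1
    have hDconv : Convex ℝ Dpi := convex_pi fun k _ => convex_posSet _
    have hsC : IsCompact (T '' Dpi) := hDpiC.image hTcont
    have hsconv : Convex ℝ (T '' Dpi) := by
      rintro y₁ ⟨Λ₁, h₁, rfl⟩ y₂ ⟨Λ₂, h₂, rfl⟩ a b ha hb hab
      refine ⟨a • Λ₁ + b • Λ₂, hDconv h₁ h₂ ha hb hab, ?_⟩
      funext c
      show G c.1 (a • Λ₁ + b • Λ₂) = a * G c.1 Λ₁ + b * G c.1 Λ₂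
      have happ : ∀ (k : Fin n) (f : (weakDualBall 𝕜 (X k)) →ᵇ ℝ),
          (a • Λ₁ + b • Λ₂) k f = a * (Λ₁ k) f + b * (Λ₂ k) f := fun k f => rfl
      rw [hG]
      simp only [happ]
      exact affine_aux _ _ _ _ a b hab
    set Q : Set ({c // c ∈ t} → ℝ) := {y | ∀ c, y c ≤ 0} with hQ
    have hQclosed : IsClosed Q := by
      have he : Q = ⋂ c, {y : {c // c ∈ t} → ℝ | y c ≤ 0} := by ext y; simp [hQ]
      rw [he]
      exact isClosed_iInter fun c => isClosed_le (continuous_apply c) continuous_const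
    have hQconv : Convex ℝ Q := by
      intro y₁ h₁ y₂ h₂ a b ha hb hab c
      have hc1 := h₁ c; have hc2 := h₂ c
      show a * y₁ c + b * y₂ c ≤ 0
      nlinarith
    have hdisj : Disjoint (T '' Dpi) Q := by
      rw [Set.disjoint_left]
      rintro y ⟨Λ, hΛ, rfl⟩ hyQ
      have hmem : Λ ∈ Dpi ∩ ⋂ c ∈ t, {Λ' | G c Λ' ≤ 0} :=
        ⟨hΛ, Set.mem_iInter₂.mpr fun c hc => hyQ ⟨c, hc⟩⟩
      rw [ht] at hmem
      exact hmem
    obtain ⟨f, u, v, hfu, huv, hvf⟩ :=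
      geometric_hahn_banach_compact_closed hsconv hsC hQconv hQclosed hdisj
    set e : {c // c ∈ t} → ({c // c ∈ t} → ℝ) :=
      fun c => fun d => if c = d then 1 else 0 with he
    have hrepr : ∀ y : {c // c ∈ t} → ℝ, f y = ∑ c, y c * f (e c) := by
      intro y
      have h1 : y = ∑ c, y c • e c := pi_eq_sum_univ y
      calc f y = f (∑ c, y c • e c) := by rw [← h1]
        _ = ∑ c, f (y c • e c) := map_sum f _ _
        _ = ∑ c, y c * f (e c) := Finset.sum_congr rfl fun c _ => by
              rw [f.map_smul]; rfl
    have hv0 : v < 0 := by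
      have h0Q : (0 : {c // c ∈ t} → ℝ) ∈ Q := fun c => le_refl 0
      have h2 := hvf 0 h0Q
      rwa [map_zero] at h2
    have hec : ∀ c, f (e c) ≤ 0 := by
      intro c
      by_contra hpos
      push_neg at hpos
      set R : ℝ := (|v| + 1) / f (e c) with hRdef
      have hRpos : 0 < R := div_pos (by positivity) hpos
      have hyQ : (-R) • e c ∈ Q := by
        intro d
        show -R * e c d ≤ 0
        rw [he]
        by_cases hcd : c = d
        · simp only [if_pos hcd]; nlinarith
        · simp only [if_neg hcd]; simp
      have h2 := hvf _ hyQ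
      rw [f.map_smul, smul_eq_mul] at h2
      have h3 : -R * f (e c) = -(|v| + 1) := by
        rw [hRdef]; field_simp
      rw [h3] at h2
      have h4 := neg_abs_le v
      linarith
    set lam : ((∀ k, X k) × (Fin n → ℝ≥0)) → ℝ :=
      fun c => if hc : c ∈ t then -(f (e ⟨c, hc⟩)) else 0 with hlamdef
    have hlamnn : ∀ c, 0 ≤ lam c := by
      intro c
      simp only [hlamdef]
      by_cases hc : c ∈ t
      · rw [dif_pos hc]; linarith [hec ⟨c, hc⟩]
      · rw [dif_neg hc]
    obtain ⟨Λ, hΛmem, hΛle⟩ := claim2 t lam hlamnn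
    have hcomp : ∑ c ∈ t, lam c * G c Λ = - f (T Λ) := by
      calc ∑ c ∈ t, lam c * G c Λ
          = ∑ c ∈ t.attach, lam c.1 * G c.1 Λ := (Finset.sum_attach t _).symm
        _ = ∑ c : {c // c ∈ t}, -(f (e c)) * G c.1 Λ := by
            rw [Finset.univ_eq_attach]
            refine Finset.sum_congr rfl fun c _ => ?_
            simp only [hlamdef]
            rw [dif_pos c.2]
        _ = - ∑ c : {c // c ∈ t}, (T Λ) c * f (e c) := by
            rw [← Finset.sum_neg_distrib]
            exact Finset.sum_congr rfl fun c _ => by rw [hT]; ring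
        _ = - f (T Λ) := by rw [← hrepr]
    have hflt := hfu (T Λ) ⟨Λ, hΛmem, rfl⟩
    rw [hcomp] at hΛle
    linarith
  obtain ⟨Λs, hΛD, hΛG⟩ := hinter
  -- extract measures
  have hmeas : ∀ k, ∃ μ : Measure (weakDualBall 𝕜 (X k)), IsProbabilityMeasure μ ∧
      ∀ f : (weakDualBall 𝕜 (X k)) →ᵇ ℝ, (∀ y, 0 ≤ f y) → Λs k f ≤ ∫ y, f y ∂μ := by
    intro k
    have hk := hΛD k (Set.mem_univ k)
    exact exists_prob_measure (Λs k) hk.2.2 hk.2.1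
  choose μ hμprob hμint using hmeas
  refine ⟨C, hC, μ, hμprob, ?_⟩
  intro x
  set J : Fin n → ℝ := fun k => ∫ φ, ‖φ.1 (x k)‖ ^ q k ∂(μ k) with hJ
  have hJnn : ∀ k, 0 ≤ J k := fun k =>
    integral_nonneg (fun φ => Real.rpow_nonneg (norm_nonneg _) _)
  have hIJ : ∀ k, Λs k (hfun k (x k)) ≤ J k := by
    intro k
    have := hμint k (hfun k (x k)) (fun φ => evalRpow_nonneg _ _ _ _)
    exact this
  have hInn : ∀ k, 0 ≤ Λs k (hfun k (x k)) := fun k =>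
    (hΛD k (Set.mem_univ k)).2.2 _ (fun φ => evalRpow_nonneg _ _ _ _)
  have key : ∀ b : Fin n → ℝ≥0,
      (∏ k, (b k : ℝ)) ^ q₀ * A x ^ q₀ ≤ C ^ q₀ * ∑ k, θ k * (b k : ℝ) ^ q k * J k := by
    intro b
    have h0 : G (x, b) Λs ≤ 0 := by
      have := Set.mem_iInter.mp hΛG (x, b)
      exact this
    rw [hG] at h0
    simp only [sub_nonpos] at h0
    have h1 : ∑ k, C ^ q₀ * θ k * (b k : ℝ) ^ q k * Λs k (hfun k (x k))
        ≤ ∑ k, C ^ q₀ * θ k * (b k : ℝ) ^ q k * J k := by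
      refine Finset.sum_le_sum fun k _ => ?_
      have hcoef : 0 ≤ C ^ q₀ * θ k * (b k : ℝ) ^ q k := by
        have := (hθpos k).le
        positivity
      exact mul_le_mul_of_nonneg_left (hIJ k) hcoef
    have h2 : ∑ k, C ^ q₀ * θ k * (b k : ℝ) ^ q k * J k
        = C ^ q₀ * ∑ k, θ k * (b k : ℝ) ^ q k * J k := by
      rw [Finset.mul_sum]
      exact Finset.sum_congr rfl fun k _ => by ring
    exact h0.trans (h1.trans h2.le)
  have hProdnn : 0 ≤ ∏ k, (J k) ^ (1 / q k) :=
    Finset.prod_nonneg fun k _ => Real.rpow_nonneg (hJnn k) _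
  by_cases hJpos : ∀ k, 0 < J k
  · -- all integrals positive
    set P : ℝ := ∏ k, (J k) ^ (1 / q k) with hP
    have hPpos : 0 < P := Finset.prod_pos fun k _ => Real.rpow_pos_of_pos (hJpos k) _
    set b : Fin n → ℝ≥0 := fun k => Real.toNNReal ((J k) ^ (-(1 / q k))) with hb
    have hbcoe : ∀ k, (b k : ℝ) = (J k) ^ (-(1 / q k)) := fun k =>
      Real.coe_toNNReal _ (Real.rpow_nonneg (hJnn k) _)
    have hbq : ∀ k, (b k : ℝ) ^ q k = (J k)⁻¹ := by
      intro k
      rw [hbcoe k, ← Real.rpow_mul (hJnn k)]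
      have he : -(1 / q k) * q k = -1 := by
        field_simp
        rw [div_self (hq k).ne']
      rw [he, Real.rpow_neg_one]
    have hb1 : ∑ k, θ k * (b k : ℝ) ^ q k * J k = 1 := by
      rw [← hθsum]
      refine Finset.sum_congr rfl fun k _ => ?_
      rw [hbq k]
      rw [mul_assoc, inv_mul_cancel₀ (hJpos k).ne', mul_one]
    have hbprod : ∏ k, (b k : ℝ) = P⁻¹ := by
      have h1 : ∀ k, (b k : ℝ) = ((J k) ^ (1 / q k))⁻¹ := by
        intro k
        rw [hbcoe k, Real.rpow_neg (hJnn k)]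
      calc ∏ k, (b k : ℝ) = ∏ k, ((J k) ^ (1 / q k))⁻¹ :=
            Finset.prod_congr rfl fun k _ => h1 k
        _ = P⁻¹ := by rw [← Finset.prod_inv_distrib]
    have hkey := key b
    rw [hbprod, hb1, mul_one, Real.inv_rpow hPpos.le] at hkey
    have hPq : 0 < P ^ q₀ := Real.rpow_pos_of_pos hPpos _
    have hAq : A x ^ q₀ ≤ C ^ q₀ * P ^ q₀ := by
      rw [inv_mul_eq_div, div_le_iff₀ hPq] at hkey
      nlinarith [hkey, hPq]
    by_contra hlt
    push_neg at hlt
    have hCP : (0:ℝ) ≤ C * P := by positivity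
    have h3 : (C * P) ^ q₀ < A x ^ q₀ := Real.rpow_lt_rpow hCP hlt hq₀
    rw [Real.mul_rpow hC.le hPpos.le] at h3
    linarith
  · push_neg at hJpos
    obtain ⟨k₀, hk₀⟩ := hJpos
    have hJ0 : J k₀ = 0 := le_antisymm (not_lt.mp (by exact fun hh => absurd hh hk₀.not_gt) |>.trans_eq rfl) (hJnn k₀)
    have hA0 : A x = 0 := by
      by_contra hne
      have hApos : 0 < A x := (hA x).lt_of_ne (Ne.symm hne)
      have hAq : 0 < A x ^ q₀ := Real.rpow_pos_of_pos hApos _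
      set M : ℝ := ∑ k, θ k * J k with hM
      have hMnn : 0 ≤ M := Finset.sum_nonneg fun k _ =>
        mul_nonneg (hθpos k).le (hJnn k)
      set Bv : ℝ := C ^ q₀ * M / (A x) ^ q₀ with hBv
      have hBnn : 0 ≤ Bv := by positivity
      set R : ℝ := (Bv + 1) ^ (1 / q₀) with hR
      have hRpos : 0 < R := Real.rpow_pos_of_pos (by linarith) _
      set b : Fin n → ℝ≥0 := fun k => if k = k₀ then Real.toNNReal R else 1 with hb
      have hbcoe : ∀ k, (b k : ℝ) = if k = k₀ then R else 1 := by
        intro k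
        simp only [hb]
        split_ifs with hkk <;> simp [Real.coe_toNNReal _ hRpos.le]
      have hbprod : ∏ k, (b k : ℝ) = R := by
        have : ∀ k, (b k : ℝ) = if k = k₀ then R else 1 := hbcoe
        calc ∏ k, (b k : ℝ) = ∏ k, (if k = k₀ then R else 1) :=
              Finset.prod_congr rfl fun k _ => hbcoe k
          _ = R := by rw [Finset.prod_ite_eq' Finset.univ k₀ (fun _ => R)]; simp
      have hsumle : ∑ k, θ k * (b k : ℝ) ^ q k * J k ≤ M := by
        refine Finset.sum_le_sum fun k _ => ?_
        by_cases hkk : k = k₀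
        · subst hkk
          rw [hJ0, mul_zero, mul_zero]
        · rw [hbcoe k, if_neg hkk, Real.one_rpow, mul_one]
      have hkey := key b
      rw [hbprod] at hkey
      have hRq : R ^ q₀ = Bv + 1 := by
        rw [hR, ← Real.rpow_mul (by linarith : (0:ℝ) ≤ Bv + 1)]
        have : 1 / q₀ * q₀ = 1 := by field_simp
        rw [this, Real.rpow_one]
      have hfin : (Bv + 1) * A x ^ q₀ ≤ C ^ q₀ * M := by
        rw [← hRq]
        calc R ^ q₀ * A x ^ q₀ ≤ C ^ q₀ * ∑ k, θ k * (b k : ℝ) ^ q k * J k := hkey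
          _ ≤ C ^ q₀ * M := by
              have : (0:ℝ) ≤ C ^ q₀ := by positivity
              nlinarith
      have hBvA : Bv * A x ^ q₀ = C ^ q₀ * M := by
        rw [hBv]
        field_simp
      nlinarith
    rw [hA0]
    exact mul_nonneg hC.le hProdnn
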